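/- Let J ⊆ {1,…,n} with #J = d and let r(J) = Σ_{i ∉ J} #{j ∈ J : j < i}. Then the set X(J,n) of affine d-planes in kⁿ whose set of minimal free variables is {X_j : j ∈ J} is in bijection with k^{r(J)+n−d}, via the unique normal-form equations X_i + Σ_{j ∈ J, j < i} b_{i,j} X_j + c_i = 0 (i ∉ J). -/

import Mathlib

/-- `{X_j : j ∈ J}` is a set of free variables of `A′ ⊆ kⁿ`: for every choice of values of
the coordinates in `J` there is a unique point of `A′` with these coordinates. -/
def IsFreeVars {k : Type*} [Field k] {n : ℕ} (A' : Set (Fin n → k)) (J : Finset (Fin n)) :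
    Prop :=
  ∀ v : Fin n → k, ∃! x, x ∈ A' ∧ ∀ j ∈ J, x j = v j

/-- `{X_j : j ∈ J}` is the set of *minimal* free variables of `A′`: it is a set of free
variables, and no `j ∈ J` can be replaced by a smaller index `i ∉ J` so that the result is
still a set of free variables. -/
def IsMinFreeVars {k : Type*} [Field k] {n : ℕ} (A' : Set (Fin n → k)) (J : Finset (Fin n)) :
    Prop :=
  IsFreeVars A' J ∧
    ∀ j ∈ J, ∀ i ∉ J, i < j → ¬ IsFreeVars A' (insert i (J.erase j))

/-- `A′` is a `d`-dimensional affine subspace of `kⁿ`. -/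
def IsAffineDPlane {k : Type*} [Field k] {n : ℕ} (d : ℕ) (A' : Set (Fin n → k)) : Prop :=
  ∃ S : AffineSubspace k (Fin n → k),
    A' = (S : Set (Fin n → k)) ∧ A'.Nonempty ∧ Module.finrank k S.direction = d


open Finset

namespace StratumAux

variable {k : Type*} [Field k] {n : ℕ}

def sol (J : Finset (Fin n)) (b : Fin n → Fin n → k) (c : Fin n → k) (v : Fin n → k) :
    Fin n → k :=
  fun i => if i ∈ J then v i else -(∑ j ∈ J.filter (fun j => j < i), b i j * v j) - c i

def stdSet (J : Finset (Fin n)) (b : Fin n → Fin n → k) (c : Fin n → k) : Set (Fin n → k) :=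
  {x | ∀ i ∉ J, x i = -(∑ j ∈ J.filter (fun j => j < i), b i j * x j) - c i}

lemma sol_mem_eq {J : Finset (Fin n)} {b : Fin n → Fin n → k} {c : Fin n → k} {v : Fin n → k}
    {j : Fin n} (hj : j ∈ J) : sol J b c v j = v j := if_pos hj

lemma sol_not_mem_eq {J : Finset (Fin n)} {b : Fin n → Fin n → k} {c : Fin n → k}
    {v : Fin n → k} {i : Fin n} (hi : i ∉ J) :
    sol J b c v i = -(∑ j ∈ J.filter (fun j => j < i), b i j * v j) - c i := if_neg hi

lemma sol_congr {J : Finset (Fin n)} {b : Fin n → Fin n → k} {c : Fin n → k} {v w : Fin n → k}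
    (h : ∀ j ∈ J, v j = w j) : sol J b c v = sol J b c w := by
  funext i
  by_cases hi : i ∈ J
  · simp [sol, hi, h i hi]
  · simp only [sol, if_neg hi]
    congr 1
    congr 1
    refine Finset.sum_congr rfl fun j hj => ?_
    rw [h j (Finset.mem_filter.mp hj).1]

lemma sol_mem (J : Finset (Fin n)) (b : Fin n → Fin n → k) (c : Fin n → k) (v : Fin n → k) :
    sol J b c v ∈ stdSet J b c := by
  intro i hi
  rw [sol_not_mem_eq hi]
  congr 2
  refine Finset.sum_congr rfl fun j hj => ?_
  rw [sol_mem_eq (Finset.mem_filter.mp hj).1]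

lemma eq_sol_self {J : Finset (Fin n)} {b : Fin n → Fin n → k} {c : Fin n → k} {x : Fin n → k}
    (hx : x ∈ stdSet J b c) : x = sol J b c x := by
  funext i
  by_cases hi : i ∈ J
  · rw [sol_mem_eq hi]
  · rw [sol_not_mem_eq hi]; exact hx i hi

lemma isFreeVars_stdSet (J : Finset (Fin n)) (b : Fin n → Fin n → k) (c : Fin n → k) :
    IsFreeVars (stdSet J b c) J := by
  intro v
  refine ⟨sol J b c v, ⟨sol_mem J b c v, fun j hj => sol_mem_eq hj⟩, ?_⟩
  rintro x ⟨hx, hxv⟩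
  rw [eq_sol_self hx, sol_congr hxv]

end StratumAux

namespace StratumAux

variable {k : Type*} [Field k] {n : ℕ}

def Lmap (J : Finset (Fin n)) (b : Fin n → Fin n → k) :
    (Fin n → k) →ₗ[k] ({i : Fin n // i ∉ J} → k) :=
  LinearMap.pi fun i =>
    (LinearMap.proj i.1 : (Fin n → k) →ₗ[k] k) +
      ∑ j ∈ J.filter (fun j => j < i.1), b i.1 j • (LinearMap.proj j : (Fin n → k) →ₗ[k] k)

lemma Lmap_apply (J : Finset (Fin n)) (b : Fin n → Fin n → k) (x : Fin n → k)
    (i : {i : Fin n // i ∉ J}) :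
    Lmap J b x i = x i.1 + ∑ j ∈ J.filter (fun j => j < i.1), b i.1 j * x j := by
  simp [Lmap, LinearMap.sum_apply, smul_eq_mul]

lemma mem_ker_Lmap_iff (J : Finset (Fin n)) (b : Fin n → Fin n → k) (x : Fin n → k) :
    x ∈ LinearMap.ker (Lmap J b) ↔ x ∈ stdSet J b (0 : Fin n → k) := by
  rw [LinearMap.mem_ker]
  constructor
  · intro h i hi
    have := congrFun h ⟨i, hi⟩
    rw [Lmap_apply] at this
    simp only [Pi.zero_apply, sub_zero] at this ⊢
    linear_combination this
  · intro h
    funext i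
    have := h i.1 i.2
    simp only [Pi.zero_apply] at this
    rw [Pi.zero_apply, Lmap_apply, this]
    ring

def extJ (J : Finset (Fin n)) (u : {j : Fin n // j ∈ J} → k) : Fin n → k :=
  fun i => if h : i ∈ J then u ⟨i, h⟩ else 0

lemma finrank_ker_Lmap (J : Finset (Fin n)) (b : Fin n → Fin n → k) :
    Module.finrank k (LinearMap.ker (Lmap J b)) = J.card := by
  have hφ : Function.Bijective
      ((LinearMap.funLeft k k (Subtype.val : {j : Fin n // j ∈ J} → Fin n)).comp
        (LinearMap.ker (Lmap J b)).subtype) := by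
    constructor
    · intro x y hxy
      ext i
      have hx := (mem_ker_Lmap_iff J b x.1).mp x.2
      have hy := (mem_ker_Lmap_iff J b y.1).mp y.2
      have key : ∀ j, j ∈ J → x.1 j = y.1 j := fun j hj => by
        have h := congrFun hxy ⟨j, hj⟩
        simpa [LinearMap.funLeft] using h
      by_cases hi : i ∈ J
      · exact key i hi
      · rw [hx i hi, hy i hi]
        simp only [Pi.zero_apply, sub_zero, neg_inj]
        refine Finset.sum_congr rfl fun j hj => ?_
        rw [key j (Finset.mem_filter.mp hj).1]
    · intro u
      have hmem : sol J b 0 (extJ J u) ∈ LinearMap.ker (Lmap J b) :=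
        (mem_ker_Lmap_iff J b _).mpr (sol_mem J b 0 (extJ J u))
      refine ⟨⟨_, hmem⟩, ?_⟩
      funext j
      simp [LinearMap.funLeft, sol_mem_eq j.2, extJ, j.2]
  have e := LinearEquiv.ofBijective _ hφ
  rw [e.finrank_eq]
  simp [Module.finrank_pi]

lemma isAffine_stdSet {d : ℕ} (J : Finset (Fin n)) (b : Fin n → Fin n → k) (c : Fin n → k)
    (hJ : J.card = d) : IsAffineDPlane d (stdSet J b c) := by
  refine ⟨AffineSubspace.mk' (sol J b c 0) (LinearMap.ker (Lmap J b)), ?_,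
    ⟨sol J b c 0, sol_mem J b c 0⟩, ?_⟩
  · ext x
    rw [SetLike.mem_coe, AffineSubspace.mem_mk', mem_ker_Lmap_iff]
    have hpmem := sol_mem J b c 0
    constructor
    · intro hx i hi
      have h1 := hx i hi
      have h2 := hpmem i hi
      have hs : ∑ j ∈ J.filter (fun j => j < i), b i j * (x j - sol J b c 0 j) =
          (∑ j ∈ J.filter (fun j => j < i), b i j * x j) -
            ∑ j ∈ J.filter (fun j => j < i), b i j * sol J b c 0 j := by
        rw [← Finset.sum_sub_distrib]
        exact Finset.sum_congr rfl fun j _ => by ring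
      simp only [vsub_eq_sub, Pi.sub_apply, Pi.zero_apply, sub_zero]
      rw [hs]
      linear_combination h1 - h2
    · intro hx i hi
      have h1 := hx i hi
      have h2 := hpmem i hi
      have hs : ∑ j ∈ J.filter (fun j => j < i), b i j * (x j - sol J b c 0 j) =
          (∑ j ∈ J.filter (fun j => j < i), b i j * x j) -
            ∑ j ∈ J.filter (fun j => j < i), b i j * sol J b c 0 j := by
        rw [← Finset.sum_sub_distrib]
        exact Finset.sum_congr rfl fun j _ => by ring
      simp only [vsub_eq_sub, Pi.sub_apply, Pi.zero_apply, sub_zero] at h1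
      rw [hs] at h1
      linear_combination h1 + h2
  · rw [AffineSubspace.direction_mk', finrank_ker_Lmap, hJ]

end StratumAux

namespace StratumAux

variable {k : Type*} [Field k] {n : ℕ}

lemma isMinFreeVars_stdSet (J : Finset (Fin n)) (b : Fin n → Fin n → k) (c : Fin n → k) :
    IsMinFreeVars (stdSet J b c) J := by
  refine ⟨isFreeVars_stdSet J b c, ?_⟩
  intro j hj i hi hij hfree
  set δ : Fin n → k := fun m => if m = j then 1 else 0 with hδ
  have hkey : ∀ m ∈ insert i (J.erase j), sol J b c δ m = sol J b c 0 m := by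
    intro m hm
    rcases Finset.mem_insert.mp hm with rfl | hm'
    · rw [sol_not_mem_eq hi, sol_not_mem_eq hi]
      congr 2
      refine Finset.sum_congr rfl fun j' hj' => ?_
      obtain ⟨hj'J, hj'lt⟩ := Finset.mem_filter.mp hj'
      have : j' ≠ j := fun h => absurd (h ▸ hj'lt) (by simp; exact le_of_lt hij)
      simp [hδ, this]
    · obtain ⟨hmj, hmJ⟩ := Finset.mem_erase.mp hm'
      rw [sol_mem_eq hmJ, sol_mem_eq hmJ]
      simp [hδ, hmj]
  obtain ⟨x, hx, huniq⟩ := hfree (sol J b c 0)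
  have h0 : sol J b c 0 = x :=
    huniq _ ⟨sol_mem J b c 0, fun m hm => rfl⟩
  have h1 : sol J b c δ = x :=
    huniq _ ⟨sol_mem J b c δ, fun m hm => hkey m hm⟩
  have : sol J b c δ j = sol J b c 0 j := by rw [h0, h1]
  rw [sol_mem_eq hj, sol_mem_eq hj] at this
  simp [hδ] at this

lemma exists_std {d : ℕ} (J : Finset (Fin n)) (A' : Set (Fin n → k))
    (h1 : IsAffineDPlane d A') (h2 : IsMinFreeVars A' J) :
    ∃ b c, A' = stdSet J b c := by
  classical
  obtain ⟨S, hS, ⟨p, hp⟩, -⟩ := h1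
  obtain ⟨hfree, hmin⟩ := h2
  have hpS : p ∈ S := by rw [hS] at hp; exact hp
  set π : (Fin n → k) →ₗ[k] ({j : Fin n // j ∈ J} → k) :=
    LinearMap.funLeft k k Subtype.val with hπ_def
  have hπ : ∀ (x : Fin n → k) (j : {j : Fin n // j ∈ J}), π x j = x j.1 := fun _ _ => rfl
  set φ : S.direction →ₗ[k] ({j : Fin n // j ∈ J} → k) :=
    π.comp S.direction.subtype with hφ_def
  have hφ : ∀ (w : S.direction) (j : {j : Fin n // j ∈ J}), φ w j = w.1 j.1 := fun _ _ => rfl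
  have hbij : Function.Bijective φ := by
    constructor
    · intro x y hxy
      have hx : x.1 +ᵥ p ∈ A' := by
        rw [hS]; exact AffineSubspace.vadd_mem_of_mem_direction x.2 hpS
      have hy : y.1 +ᵥ p ∈ A' := by
        rw [hS]; exact AffineSubspace.vadd_mem_of_mem_direction y.2 hpS
      obtain ⟨z, hz, huniq⟩ := hfree (x.1 +ᵥ p)
      have e1 : x.1 +ᵥ p = z := huniq _ ⟨hx, fun m hm => rfl⟩
      have e2 : y.1 +ᵥ p = z := by
        refine huniq _ ⟨hy, fun m hm => ?_⟩
        have : y.1 m = x.1 m := by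
          have := congrFun hxy ⟨m, hm⟩
          rw [hφ, hφ] at this; exact this.symm
        simp only [vadd_eq_add, Pi.add_apply, this]
      have : x.1 +ᵥ p = y.1 +ᵥ p := e1.trans e2.symm
      exact Subtype.ext (by simpa using this)
    · intro u
      obtain ⟨x, ⟨hxA, hxv⟩, -⟩ :=
        hfree (fun m => if h : m ∈ J then u ⟨m, h⟩ + p m else 0)
      have hxS : x ∈ S := by rw [hS] at hxA; exact hxA
      have hd : x - p ∈ S.direction := by
        have := AffineSubspace.vsub_mem_direction hxS hpS
        simpa using this
      refine ⟨⟨x - p, hd⟩, ?_⟩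
      funext j
      rw [hφ]
      have := hxv j.1 j.2
      rw [dif_pos j.2] at this
      simp only [Pi.sub_apply, this, Subtype.coe_eta]
      ring
  set e := LinearEquiv.ofBijective φ hbij with he_def
  set ℓ : ({j : Fin n // j ∈ J} → k) →ₗ[k] (Fin n → k) :=
    S.direction.subtype.comp e.symm.toLinearMap with hℓ_def
  have hℓmem : ∀ u, ℓ u ∈ S.direction := fun u => (e.symm u).2
  have hℓφ : ∀ u, φ ⟨ℓ u, hℓmem u⟩ = u := by
    intro u
    have : (⟨ℓ u, hℓmem u⟩ : S.direction) = e.symm u := rfl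
    rw [this]
    exact e.apply_symm_apply u
  -- every point of A' is q + ℓ (π x)
  set q : Fin n → k := p - ℓ (π p) with hq_def
  have hrep : ∀ x ∈ A', x = q + ℓ (π x) := by
    intro x hx
    have hxS : x ∈ S := by rw [hS] at hx; exact hx
    have hd : x - p ∈ S.direction := by
      have := AffineSubspace.vsub_mem_direction hxS hpS
      simpa using this
    have h1 : φ ⟨x - p, hd⟩ = π x - π p := by
      funext j; rw [hφ]; simp [hπ]
    have h2 : e.symm (π x - π p) = ⟨x - p, hd⟩ := by
      rw [LinearEquiv.symm_apply_eq]
      exact h1.symm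
    have h3 : ℓ (π x - π p) = x - p := by
      rw [hℓ_def]
      simp only [LinearMap.comp_apply, LinearEquiv.coe_toLinearMap, h2,
        Submodule.subtype_apply]
    have := map_sub ℓ (π x) (π p)
    rw [h3] at this
    rw [hq_def]
    funext i
    have hi := congrFun this i
    simp only [Pi.sub_apply] at hi ⊢
    simp only [Pi.add_apply, Pi.sub_apply]
    linear_combination hi
  have hmemA : ∀ u, q + ℓ u ∈ A' := by
    intro u
    have hmem : ℓ (u - π p) ∈ S.direction := hℓmem _
    have : q + ℓ u = ℓ (u - π p) +ᵥ p := by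
      rw [hq_def, map_sub]
      funext i
      simp only [vadd_eq_add, Pi.add_apply, Pi.sub_apply]
      ring
    rw [this, hS]
    exact AffineSubspace.vadd_mem_of_mem_direction hmem hpS
  -- coefficients
  set A : Fin n → Fin n → k := fun i m =>
    if h : m ∈ J then ℓ (fun j' => if ⟨m, h⟩ = j' then 1 else 0) i else 0 with hA_def
  have hA : ∀ (i : Fin n) (j : {m : Fin n // m ∈ J}),
      A i j.1 = ℓ (fun j' => if j = j' then 1 else 0) i := by
    intro i j
    rw [hA_def]
    simp only [dif_pos j.2, Subtype.coe_eta]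
  have hℓsum : ∀ (u : {j : Fin n // j ∈ J} → k) (i : Fin n),
      ℓ u i = ∑ j ∈ J.attach, A i j.1 * u j := by
    intro u i
    have := LinearMap.pi_apply_eq_sum_univ ℓ u
    have hi := congrFun this i
    rw [hi]
    rw [Finset.sum_apply]
    rw [show (Finset.univ : Finset {j : Fin n // j ∈ J}) = J.attach from rfl]
    refine Finset.sum_congr rfl fun j _ => ?_
    rw [hA i j]
    simp [mul_comm]
  have keyA : ∀ x ∈ A', ∀ i, x i = q i + ∑ m ∈ J, A i m * x m := by
    intro x hx i
    have h0 := congrFun (hrep x hx) i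
    rw [Pi.add_apply, hℓsum (π x) i] at h0
    rw [h0]
    congr 1
    rw [← Finset.sum_attach J (fun m => A i m * x m)]
    exact Finset.sum_congr rfl fun j _ => by rw [hπ]
  -- vanishing of coefficients above the diagonal
  have hvan : ∀ i ∉ J, ∀ j ∈ J, i < j → A i j = 0 := by
    intro i hi j hj hij
    by_contra hne
    refine hmin j hj i hi hij ?_
    intro v
    set t : k := (v i - q i - ∑ m ∈ J.erase j, A i m * v m) / A i j with ht_def
    set u : Fin n → k := fun m => if m = j then t else v m with hu_def
    obtain ⟨x, ⟨hxA, hxu⟩, hxuniq⟩ := hfree u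
    have hsplit : ∀ y : Fin n → k, A i j * y j + ∑ m ∈ J.erase j, A i m * y m =
        ∑ m ∈ J, A i m * y m := fun y => Finset.add_sum_erase J (fun m => A i m * y m) hj
    refine ⟨x, ⟨hxA, ?_⟩, ?_⟩
    · intro m hm
      rcases Finset.mem_insert.mp hm with rfl | hm'
      · have hk := keyA x hxA m
        rw [← hsplit x] at hk
        have hxj : x j = t := by rw [hxu j hj, hu_def]; simp
        have hxm : ∑ m' ∈ J.erase j, A m m' * x m' = ∑ m' ∈ J.erase j, A m m' * v m' := by
          refine Finset.sum_congr rfl fun m' hm' => ?_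
          obtain ⟨hm'j, hm'J⟩ := Finset.mem_erase.mp hm'
          rw [hxu m' hm'J, hu_def]; simp [hm'j]
        rw [hxj, hxm, ht_def] at hk
        rw [hk]
        field_simp
        ring
      · obtain ⟨hmj, hmJ⟩ := Finset.mem_erase.mp hm'
        rw [hxu m hmJ, hu_def]; simp [hmj]
    · intro y ⟨hyA, hyv⟩
      refine hxuniq y ⟨hyA, ?_⟩
      intro m hm
      by_cases hmj : m = j
      · subst hmj
        have hk := keyA y hyA i
        rw [← hsplit y] at hk
        have hym : ∑ m' ∈ J.erase m, A i m' * y m' = ∑ m' ∈ J.erase m, A i m' * v m' := by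
          refine Finset.sum_congr rfl fun m' hm' => ?_
          rw [hyv m' (Finset.mem_insert_of_mem hm')]
        have hyi : y i = v i := hyv i (Finset.mem_insert_self i _)
        rw [hym, hyi] at hk
        have : y m = t := by
          rw [ht_def]
          rw [eq_div_iff hne]
          linear_combination -hk
        rw [this, hu_def]; simp
      · rw [hyv m (Finset.mem_insert_of_mem (Finset.mem_erase.mpr ⟨hmj, hm⟩)), hu_def]
        simp [hmj]
  -- conclusion
  refine ⟨fun i m => -A i m, fun i => -q i, ?_⟩
  have hsub : A' ⊆ stdSet J (fun i m => -A i m) (fun i => -q i) := by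
    intro x hx i hi
    have hk := keyA x hx i
    rw [← Finset.sum_filter_add_sum_filter_not J (fun m => m < i) (fun m => A i m * x m)] at hk
    have hzero : ∑ m ∈ J.filter (fun m => ¬ m < i), A i m * x m = 0 := by
      refine Finset.sum_eq_zero fun m hm => ?_
      obtain ⟨hmJ, hmlt⟩ := Finset.mem_filter.mp hm
      have hmi : m ≠ i := fun h => hi (h ▸ hmJ)
      have : i < m := lt_of_le_of_ne (not_lt.mp hmlt) (Ne.symm hmi)
      rw [hvan i hi m hmJ this, zero_mul]
    rw [hzero, add_zero] at hk
    rw [hk]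
    rw [← Finset.sum_neg_distrib]
    ring_nf
  refine Set.Subset.antisymm hsub ?_
  intro y hy
  obtain ⟨x, ⟨hxA, hxy⟩, -⟩ := hfree y
  have hxstd := hsub hxA
  have : x = y := by
    rw [eq_sol_self hxstd, eq_sol_self hy, sol_congr hxy]
  rw [← this]
  exact hxA

end StratumAux

namespace StratumAux

variable {k : Type*} [Field k] {n : ℕ}

lemma stdSet_congr {J : Finset (Fin n)} {b b' c c' : _}
    (hb : ∀ i ∉ J, ∀ j ∈ J, j < i → b i j = b' i j) (hc : ∀ i ∉ J, c i = c' i) :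
    stdSet (k := k) J b c = stdSet J b' c' := by
  ext x
  refine forall_congr' fun i => imp_congr_right fun hi => ?_
  rw [hc i hi]
  have : ∑ j ∈ J.filter (fun j => j < i), b i j * x j
      = ∑ j ∈ J.filter (fun j => j < i), b' i j * x j := by
    refine Finset.sum_congr rfl fun j hj => ?_
    obtain ⟨hjJ, hjlt⟩ := Finset.mem_filter.mp hj
    rw [hb i hi j hjJ hjlt]
  rw [this]

lemma std_inj {J : Finset (Fin n)} {b b' c c' : _}
    (h : stdSet (k := k) J b c = stdSet J b' c') :
    (∀ i ∉ J, c i = c' i) ∧ (∀ i ∉ J, ∀ j ∈ J, j < i → b i j = b' i j) := by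
  have hc : ∀ i ∉ J, c i = c' i := by
    intro i hi
    have hz : sol J b c 0 ∈ stdSet J b' c' := h ▸ sol_mem J b c 0
    have h1 := hz i hi
    have h2 : ∑ j ∈ J.filter (fun j => j < i), b' i j * sol J b c 0 j = 0 := by
      refine Finset.sum_eq_zero fun j hj => ?_
      rw [sol_mem_eq (Finset.mem_filter.mp hj).1]
      simp
    rw [h2, sol_not_mem_eq hi] at h1
    have h3 : ∑ j ∈ J.filter (fun j => j < i), b i j * (0 : Fin n → k) j = 0 := by
      refine Finset.sum_eq_zero fun j hj => by simp
    rw [h3] at h1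
    linear_combination -h1
  refine ⟨hc, ?_⟩
  intro i hi j hj hji
  set δ : Fin n → k := fun m => if m = j then 1 else 0 with hδ
  have hz : sol J b c δ ∈ stdSet J b' c' := h ▸ sol_mem J b c δ
  have h1 := hz i hi
  have hmemf : j ∈ J.filter (fun j' => j' < i) := Finset.mem_filter.mpr ⟨hj, hji⟩
  have h2 : ∑ j' ∈ J.filter (fun j' => j' < i), b' i j' * sol J b c δ j' = b' i j := by
    rw [Finset.sum_eq_single_of_mem j hmemf]
    · rw [sol_mem_eq hj]; simp [hδ]
    · intro j' hj' hne
      rw [sol_mem_eq (Finset.mem_filter.mp hj').1]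
      simp [hδ, hne]
  have h3 : ∑ j' ∈ J.filter (fun j' => j' < i), b i j' * δ j' = b i j := by
    rw [Finset.sum_eq_single_of_mem j hmemf]
    · simp [hδ]
    · intro j' hj' hne; simp [hδ, hne]
  rw [h2, sol_not_mem_eq hi, h3] at h1
  have := hc i hi
  linear_combination -h1 - this

abbrev Bidx {n : ℕ} (J : Finset (Fin n)) : Type :=
  {p : Fin n × Fin n // p.1 ∉ J ∧ p.2 ∈ J ∧ p.2 < p.1}

abbrev Cidx {n : ℕ} (J : Finset (Fin n)) : Type := {i : Fin n // i ∉ J}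

def bOf (J : Finset (Fin n)) (f : (Bidx J ⊕ Cidx J) → k) : Fin n → Fin n → k :=
  fun i j => if h : i ∉ J ∧ j ∈ J ∧ j < i then f (Sum.inl ⟨(i, j), h⟩) else 0

def cOf (J : Finset (Fin n)) (f : (Bidx J ⊕ Cidx J) → k) : Fin n → k :=
  fun i => if h : i ∉ J then f (Sum.inr ⟨i, h⟩) else 0

lemma bOf_pos {J : Finset (Fin n)} {f : (Bidx J ⊕ Cidx J) → k} {i j : Fin n}
    (h : i ∉ J ∧ j ∈ J ∧ j < i) : bOf J f i j = f (Sum.inl ⟨(i, j), h⟩) := dif_pos h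

lemma cOf_pos {J : Finset (Fin n)} {f : (Bidx J ⊕ Cidx J) → k} {i : Fin n}
    (h : i ∉ J) : cOf J f i = f (Sum.inr ⟨i, h⟩) := dif_pos h

end StratumAux


open StratumAux

/-- The stratum `X(J,n)` of affine `d`-planes in `kⁿ` with minimal free variables
`{X_j : j ∈ J}` is in bijection with `k^{r(J)+n−d}`, where
`r(J) = Σ_{i ∉ J} #{j ∈ J : j < i}`. -/
theorem stratum_equiv_affine_space {k : Type*} [Field k] {n d : ℕ} (J : Finset (Fin n))
    (hJ : J.card = d) :
    Nonempty
      ({A' : Set (Fin n → k) // IsAffineDPlane d A' ∧ IsMinFreeVars A' J} ≃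
        (Fin ((∑ i ∈ Jᶜ, (J.filter (fun j => j < i)).card) + (n - d)) → k)) := by
  classical
  set F : ((Bidx J ⊕ Cidx J) → k) →
      {A' : Set (Fin n → k) // IsAffineDPlane d A' ∧ IsMinFreeVars A' J} := fun f =>
    ⟨stdSet J (bOf J f) (cOf J f),
      isAffine_stdSet J (bOf J f) (cOf J f) hJ,
      isMinFreeVars_stdSet J (bOf J f) (cOf J f)⟩ with hF
  have hFbij : Function.Bijective F := by
    constructor
    · intro f g hfg
      have h : stdSet J (bOf J f) (cOf J f) = stdSet J (bOf J g) (cOf J g) :=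
        congrArg Subtype.val hfg
      obtain ⟨hc, hb⟩ := std_inj h
      funext m
      rcases m with ⟨⟨i, j⟩, hi, hj, hji⟩ | ⟨i, hi⟩
      · have h3 := hb i hi j hj hji
        rw [bOf_pos (⟨hi, hj, hji⟩ : i ∉ J ∧ j ∈ J ∧ j < i),
          bOf_pos (⟨hi, hj, hji⟩ : i ∉ J ∧ j ∈ J ∧ j < i)] at h3
        exact h3
      · have h3 := hc i hi
        rw [cOf_pos hi, cOf_pos hi] at h3
        exact h3
    · rintro ⟨A', hA, hM⟩
      obtain ⟨b, c, rfl⟩ := exists_std J A' hA hM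
      refine ⟨Sum.elim (fun p => b p.1.1 p.1.2) (fun i => c i.1), ?_⟩
      refine Subtype.ext ?_
      show stdSet J _ _ = stdSet J b c
      refine stdSet_congr ?_ ?_
      · intro i hi j hj hji
        rw [bOf_pos (⟨hi, hj, hji⟩ : i ∉ J ∧ j ∈ J ∧ j < i)]
        rfl
      · intro i hi
        rw [cOf_pos hi]
        rfl
  have eσ : Bidx J ≃ (Σ i : Cidx J, {j : Fin n // j ∈ J.filter (fun j => j < i.1)}) :=
    { toFun := fun p => ⟨⟨p.1.1, p.2.1⟩, ⟨p.1.2, Finset.mem_filter.mpr ⟨p.2.2.1, p.2.2.2⟩⟩⟩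
      invFun := fun s => ⟨(s.1.1, s.2.1), s.1.2, (Finset.mem_filter.mp s.2.2).1,
        (Finset.mem_filter.mp s.2.2).2⟩
      left_inv := fun ⟨⟨i, j⟩, h⟩ => rfl
      right_inv := fun ⟨⟨i, hi⟩, ⟨j, hj⟩⟩ => rfl }
  have h1 : Fintype.card (Cidx J) = n - d := by
    have e : Cidx J ≃ {i : Fin n // i ∈ Jᶜ} :=
      Equiv.subtypeEquivRight (fun i => by simp)
    rw [Fintype.card_congr e, Fintype.card_coe, Finset.card_compl, Fintype.card_fin, hJ]
  have h2 : Fintype.card (Bidx J) = ∑ i ∈ Jᶜ, (J.filter (fun j => j < i)).card := by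
    rw [Fintype.card_congr eσ, Fintype.card_sigma]
    simp only [Fintype.card_coe]
    exact (Finset.sum_subtype Jᶜ (fun x => by simp)
      (fun i => (J.filter (fun j => j < i)).card)).symm
  have hcard : Fintype.card (Bidx J ⊕ Cidx J) =
      (∑ i ∈ Jᶜ, (J.filter (fun j => j < i)).card) + (n - d) := by
    rw [Fintype.card_sum, h1, h2]
  exact ⟨(Equiv.ofBijective F hFbij).symm.trans
    (Equiv.arrowCongr (Fintype.equivFinOfCardEq hcard) (Equiv.refl k))⟩
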